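/- Let (S_n)_{n≥1} be a demimartingale with the convention S_0 = 0 and E[|S_0|^r] = 0, let r ≥ 1 be such that |S_k|^r is integrable for every k, let (b_k)_{1≤k≤n} be positive nondecreasing real numbers, and let ε > 0. Then P( max_{1≤k≤n} |S_k|/b_k ≥ ε ) ≤ ε^{−r} · Σ_{k=1}^n ( E[|S_k|^r] − E[|S_{k−1}|^r] ) / b_k^r. -/

import Mathlib

open MeasureTheory Filter

/-- A sequence `(T_n)_{n≥1}` of integrable real random variables is a *demimartingale*
if for every `j ≥ 1` and every componentwise nondecreasing `g : ℝ^j → ℝ` (i.e. monotone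
for the product order) such that `(T_{j+1} - T_j) · g(T_1, …, T_j)` is integrable, we have
`E[(T_{j+1} - T_j) g(T_1, …, T_j)] ≥ 0`. -/
def IsDemimartingale {Ω : Type*} [MeasurableSpace Ω] (μ : Measure Ω)
    (T : ℕ → Ω → ℝ) : Prop :=
  (∀ j, 1 ≤ j → Integrable (T j) μ) ∧
  ∀ j, 1 ≤ j → ∀ g : (Fin j → ℝ) → ℝ, Monotone g →
    Integrable (fun ω => (T (j + 1) ω - T j ω) * g (fun i => T (i.val + 1) ω)) μ →
    0 ≤ ∫ ω, (T (j + 1) ω - T j ω) * g (fun i => T (i.val + 1) ω) ∂μ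

/-- A sequence `(T_n)_{n≥1}` of integrable real random variables is a *demisubmartingale*
if the above holds for every such `g` that is in addition nonnegative. -/
def IsDemisubmartingale {Ω : Type*} [MeasurableSpace Ω] (μ : Measure Ω)
    (T : ℕ → Ω → ℝ) : Prop :=
  (∀ j, 1 ≤ j → Integrable (T j) μ) ∧
  ∀ j, 1 ≤ j → ∀ g : (Fin j → ℝ) → ℝ, Monotone g → (∀ x, 0 ≤ g x) →
    Integrable (fun ω => (T (j + 1) ω - T j ω) * g (fun i => T (i.val + 1) ω)) μ →
    0 ≤ ∫ ω, (T (j + 1) ω - T j ω) * g (fun i => T (i.val + 1) ω) ∂μ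


private lemma rpow_self_mul (t : ℝ) (ht : 0 < t) (r : ℝ) : t ^ (r - 1) * t = t ^ r := by
  nth_rewrite 2 [← Real.rpow_one t]
  rw [← Real.rpow_add ht]
  norm_num

private lemma hjr_subgrad {r : ℝ} (hr : 1 ≤ r) (x y : ℝ) :
    (if x ≤ 0 then (0:ℝ) else r * max x 0 ^ (r - 1)) * (y - x)
      ≤ max y 0 ^ r - max x 0 ^ r := by
  have hr0 : (0:ℝ) < r := lt_of_lt_of_le one_pos hr
  by_cases hx : x ≤ 0
  · simp only [if_pos hx]
    have : max x 0 = 0 := max_eq_right hx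
    rw [this, Real.zero_rpow (ne_of_gt hr0)]
    have := Real.rpow_nonneg (le_max_right y 0) r
    linarith
  · push_neg at hx
    simp only [if_neg (not_le.mpr hx)]
    have hmx : max x 0 = x := max_eq_left hx.le
    rw [hmx]
    have key : x ^ (r - 1) * x = x ^ r := rpow_self_mul x hx r
    have hA : (0:ℝ) ≤ x ^ (r - 1) := Real.rpow_nonneg hx.le _
    have hB : (0:ℝ) ≤ x ^ r := Real.rpow_nonneg hx.le _
    by_cases hy : y ≤ 0
    · have : max y 0 = 0 := max_eq_right hy
      rw [this, Real.zero_rpow (ne_of_gt hr0)]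
      nlinarith [mul_nonneg (mul_nonneg hr0.le hA) (neg_nonneg.mpr hy)]
    · push_neg at hy
      have hmy : max y 0 = y := max_eq_left hy.le
      rw [hmy]
      have hs : (-1:ℝ) ≤ y / x - 1 := by
        have : 0 ≤ y / x := div_nonneg hy.le hx.le
        linarith
      have bern := one_add_mul_self_le_rpow_one_add hs hr
      have h1s : 1 + (y / x - 1) = y / x := by ring
      rw [h1s] at bern
      have hdr : (y / x) ^ r = y ^ r / x ^ r := Real.div_rpow hy.le hx.le r
      rw [hdr] at bern
      -- multiply by x ^ r > 0
      have hBpos : (0:ℝ) < x ^ r := Real.rpow_pos_of_pos hx r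
      have bern2 : (1 + r * (y / x - 1)) * x ^ r ≤ y ^ r :=
        (le_div_iff₀ hBpos).mp bern
      have h2 : (y / x) * x ^ r = x ^ (r - 1) * y := by
        rw [← key]; field_simp
      nlinarith [bern2]

private lemma hjr_mul_rpow_le {r : ℝ} (hr : 1 ≤ r) {a b : ℝ} (ha : 0 ≤ a) (hb : 0 ≤ b) :
    a * b ^ (r - 1) ≤ a ^ r + b ^ r := by
  rcases eq_or_lt_of_le ha with h | ha'
  · rw [← h, zero_mul]
    exact add_nonneg (Real.rpow_nonneg le_rfl r) (Real.rpow_nonneg hb r)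
  rcases le_or_gt a b with hab | hba
  · have hb' : 0 < b := lt_of_lt_of_le ha' hab
    have : a * b ^ (r - 1) ≤ b * b ^ (r - 1) :=
      mul_le_mul_of_nonneg_right hab (Real.rpow_nonneg hb _)
    have hbb : b * b ^ (r - 1) = b ^ r := by rw [mul_comm]; exact rpow_self_mul b hb' r
    have := Real.rpow_nonneg ha r
    linarith
  · have : b ^ (r - 1) ≤ a ^ (r - 1) := Real.rpow_le_rpow hb hba.le (by linarith)
    have h2 : a * b ^ (r - 1) ≤ a * a ^ (r - 1) := mul_le_mul_of_nonneg_left this ha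
    have haa : a * a ^ (r - 1) = a ^ r := by rw [mul_comm]; exact rpow_self_mul a ha' r
    have := Real.rpow_nonneg hb r
    linarith

private lemma hjr_cder_mono {r : ℝ} (hr : 1 ≤ r) :
    Monotone (fun x : ℝ => if x ≤ 0 then (0:ℝ) else r * max x 0 ^ (r - 1)) := by
  intro x y hxy
  dsimp only
  by_cases hy : y ≤ 0
  · rw [if_pos (le_trans hxy hy), if_pos hy]
  · rw [if_neg hy]
    push_neg at hy
    rw [max_eq_left hy.le]
    by_cases hx : x ≤ 0
    · rw [if_pos hx]
      exact mul_nonneg (by linarith) (Real.rpow_nonneg hy.le _)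
    · rw [if_neg hx]
      push_neg at hx
      rw [max_eq_left hx.le]
      exact mul_le_mul_of_nonneg_left (Real.rpow_le_rpow hx.le hxy (by linarith)) (by linarith)

private lemma hjr_cder_nonneg {r : ℝ} (hr : 1 ≤ r) (x : ℝ) :
    0 ≤ (if x ≤ 0 then (0:ℝ) else r * max x 0 ^ (r - 1)) := by
  by_cases hx : x ≤ 0
  · rw [if_pos hx]
  · rw [if_neg hx]
    exact mul_nonneg (by linarith) (Real.rpow_nonneg (le_max_right x 0) _)

private lemma hjr_cder_abs_le {r : ℝ} (hr : 1 ≤ r) (x : ℝ) :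
    |if x ≤ 0 then (0:ℝ) else r * max x 0 ^ (r - 1)| ≤ r * |x| ^ (r - 1) := by
  have h0 : (0:ℝ) ≤ r * |x| ^ (r - 1) :=
    mul_nonneg (by linarith) (Real.rpow_nonneg (abs_nonneg x) _)
  by_cases hx : x ≤ 0
  · rw [if_pos hx, abs_zero]; exact h0
  · push_neg at hx
    rw [if_neg (not_le.mpr hx), max_eq_left hx.le, abs_of_nonneg
      (mul_nonneg (by linarith) (Real.rpow_nonneg hx.le _)), abs_of_pos hx]

private lemma hjr_abel (c d : ℕ → ℝ) (n : ℕ) (hd0 : d 0 = 0)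
    (hd : ∀ k, 1 ≤ k → k ≤ n → 0 ≤ d k)
    (hc : ∀ k, 1 ≤ k → k < n → c (k + 1) ≤ c k)
    (hcn : ∀ k, 1 ≤ k → k ≤ n → 0 ≤ c k) :
    0 ≤ ∑ k ∈ Finset.Icc 1 n, c k * (d k - d (k - 1)) := by
  have key : ∀ m, m ≤ n → c m * d m ≤ ∑ k ∈ Finset.Icc 1 m, c k * (d k - d (k - 1)) := by
    intro m
    induction m with
    | zero => intro _; simp [hd0]
    | succ m ih =>
      intro hm
      rw [show Finset.Icc 1 (m + 1) = insert (m + 1) (Finset.Icc 1 m) by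
        ext a; simp [Finset.mem_Icc]; omega]
      rw [Finset.sum_insert (by simp)]
      have ihm := ih (by omega)
      have hcd : c (m + 1) * d m ≤ c m * d m := by
        rcases Nat.eq_zero_or_pos m with h | h
        · simp [h, hd0]
        · exact mul_le_mul_of_nonneg_right (hc m h (by omega)) (hd m h (by omega))
      have : (m + 1) - 1 = m := by omega
      rw [this]
      nlinarith
  rcases Nat.eq_zero_or_pos n with h | h
  · simp [h]
  · exact le_trans (mul_nonneg (hcn n h le_rfl) (hd n h le_rfl)) (key n le_rfl)

private lemma hjr_split {r : ℝ} (hr0 : 0 < r) (x : ℝ) :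
    max x 0 ^ r + max (-x) 0 ^ r = |x| ^ r := by
  rcases le_or_gt 0 x with h | h
  · rw [max_eq_left h, max_eq_right (by linarith), Real.zero_rpow (ne_of_gt hr0),
      abs_of_nonneg h, add_zero]
  · rw [max_eq_right h.le, max_eq_left (by linarith), Real.zero_rpow (ne_of_gt hr0),
      abs_of_neg h, zero_add]


private lemma hjr_one_sided {Ω : Type*} [MeasurableSpace Ω] (μ : Measure Ω)
    [IsProbabilityMeasure μ]
    (G : ℕ → Ω → ℝ) (hGm : ∀ k, Measurable (G k))
    (hG0 : ∀ ω, G 0 ω = 0)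
    (hdemi : ∀ j, 1 ≤ j → ∀ g : (Fin j → ℝ) → ℝ, Monotone g →
      Integrable (fun ω => (G (j + 1) ω - G j ω) * g (fun i => G (i.val + 1) ω)) μ →
      0 ≤ ∫ ω, (G (j + 1) ω - G j ω) * g (fun i => G (i.val + 1) ω) ∂μ)
    (r : ℝ) (hr : 1 ≤ r)
    (hint : ∀ k, Integrable (fun ω => |G k ω| ^ r) μ)
    (n : ℕ) (b : ℕ → ℝ)
    (hb_pos : ∀ k, 1 ≤ k → k ≤ n → 0 < b k)
    (hb_mono : ∀ k, 1 ≤ k → k < n → b k ≤ b (k + 1))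
    (ε : ℝ) (hε : 0 < ε) :
    ε ^ r * (μ {ω | ∃ k, 1 ≤ k ∧ k ≤ n ∧ ε * b k ≤ G k ω}).toReal
      ≤ ∑ k ∈ Finset.Icc 1 n,
          ((∫ ω, max (G k ω) 0 ^ r ∂μ) - (∫ ω, max (G (k - 1) ω) 0 ^ r ∂μ)) / b k ^ r := by
  classical
  have hr0 : (0:ℝ) < r := lt_of_lt_of_le one_pos hr
  -- the first-entrance decomposition sets
  set D : ℕ → Set Ω := fun k => {ω | ∃ j, 1 ≤ j ∧ j ≤ k ∧ ε * b j ≤ G j ω} with hDdef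
  set u : ℕ → Ω → ℝ := fun k => (D k).indicator (fun _ => (1:ℝ)) with hudef
  set T : ℕ → Ω → ℝ := fun k ω => max (G k ω) 0 ^ r with hTdef
  have hD0 : D 0 = ∅ := by
    ext ω; simp only [hDdef, Set.mem_setOf_eq, Set.mem_empty_iff_false, iff_false]
    rintro ⟨j, h1, h2, -⟩; omega
  have hDsub : ∀ {k l : ℕ}, k ≤ l → D k ⊆ D l := by
    rintro k l hkl ω ⟨j, h1, h2, h3⟩; exact ⟨j, h1, le_trans h2 hkl, h3⟩
  have hDmeas : ∀ k, MeasurableSet (D k) := by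
    intro k
    have : D k = ⋃ j ∈ Finset.Icc 1 k, {ω | ε * b j ≤ G j ω} := by
      ext ω
      simp only [hDdef, Set.mem_setOf_eq, Set.mem_iUnion, Finset.mem_Icc, exists_prop]
      tauto
    rw [this]
    exact Set.Finite.measurableSet_biUnion (Finset.finite_toSet _)
      (fun j _ => measurableSet_le measurable_const (hGm j))
  have hu0 : ∀ k ω, 0 ≤ u k ω := by
    intro k ω; simp only [hudef]
    exact Set.indicator_nonneg (fun _ _ => zero_le_one) ω
  have hu1 : ∀ k ω, u k ω ≤ 1 := by
    intro k ω; simp only [hudef, Set.indicator_apply]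
    split <;> norm_num
  have hum : ∀ k, Measurable (u k) := by
    intro k; exact (measurable_const.indicator (hDmeas k))
  have hTnn : ∀ k ω, 0 ≤ T k ω := fun k ω => Real.rpow_nonneg (le_max_right _ _) r
  have hTm : ∀ k, Measurable (T k) := fun k =>
    (Real.continuous_rpow_const hr0.le).measurable.comp ((hGm k).max measurable_const)
  have hTle : ∀ k ω, T k ω ≤ |G k ω| ^ r := fun k ω =>
    Real.rpow_le_rpow (le_max_right _ _) (max_le (le_abs_self _) (abs_nonneg _)) hr0.le
  have hTint : ∀ k, Integrable (T k) μ := by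
    intro k
    refine (hint k).mono' (hTm k).aestronglyMeasurable (Eventually.of_forall fun ω => ?_)
    rw [Real.norm_eq_abs, abs_of_nonneg (hTnn k ω)]
    exact hTle k ω
  have hTuint : ∀ k m, Integrable (fun ω => T k ω * u m ω) μ := by
    intro k m
    refine (hint k).mono' ((hTm k).mul (hum m)).aestronglyMeasurable
      (Eventually.of_forall fun ω => ?_)
    rw [Real.norm_eq_abs, abs_of_nonneg (mul_nonneg (hTnn k ω) (hu0 m ω))]
    calc T k ω * u m ω ≤ T k ω * 1 := mul_le_mul_of_nonneg_left (hu1 m ω) (hTnn k ω)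
      _ = T k ω := mul_one _
      _ ≤ |G k ω| ^ r := hTle k ω
  have hT0 : ∀ ω, T 0 ω = 0 := by
    intro ω; simp only [hTdef, hG0 ω, max_self, Real.zero_rpow (ne_of_gt hr0)]
  -- the key demimartingale step
  have hstep : ∀ k, 1 ≤ k →
      ∫ ω, T (k - 1) ω * u (k - 1) ω ∂μ ≤ ∫ ω, T k ω * u (k - 1) ω ∂μ := by
    intro k hk1
    rcases eq_or_lt_of_le hk1 with h1 | h2
    · -- k = 1 : both sides vanish
      rw [← h1]
      have hu0' : ∀ ω, u (1 - 1) ω = 0 := by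
        intro ω
        simp [hudef, hD0, show (1:ℕ) - 1 = 0 from rfl]
      simp only [hu0', mul_zero, integral_zero, le_refl]
    · -- k ≥ 2
      have hj1 : 1 ≤ k - 1 := by omega
      have hjk : (k - 1) + 1 = k := by omega
      set j := k - 1 with hjdef
      have hjj : j - 1 + 1 = j := by omega
      set g : (Fin j → ℝ) → ℝ := fun x =>
        (if x ⟨j - 1, by omega⟩ ≤ 0 then (0:ℝ)
          else r * max (x ⟨j - 1, by omega⟩) 0 ^ (r - 1)) *
        (if ∃ i : Fin j, ε * b (i.val + 1) ≤ x i then (1:ℝ) else 0) with hgdef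
      have hgmono : Monotone g := by
        intro x y hxy
        simp only [hgdef]
        refine mul_le_mul ?_ ?_ ?_ ?_
        · exact hjr_cder_mono hr (hxy ⟨j - 1, by omega⟩)
        · by_cases hx : ∃ i : Fin j, ε * b (i.val + 1) ≤ x i
          · obtain ⟨i, hi⟩ := hx
            rw [if_pos ⟨i, hi⟩, if_pos ⟨i, le_trans hi (hxy i)⟩]
          · rw [if_neg hx]
            split <;> norm_num
        · split <;> norm_num
        · exact hjr_cder_nonneg hr _
      have hgval : ∀ ω, g (fun i => G (i.val + 1) ω) =
          (if G j ω ≤ 0 then (0:ℝ) else r * max (G j ω) 0 ^ (r - 1)) * u j ω := by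
        intro ω
        simp only [hgdef, hjj]
        congr 1
        · -- the indicator part
          show _ = (D j).indicator (fun _ => (1:ℝ)) ω
          by_cases hω : ω ∈ D j
          · rw [Set.indicator_of_mem hω]
            obtain ⟨jj, hjj1, hjj2, hjj3⟩ := hω
            have hlt : jj - 1 < j := by omega
            rw [if_pos ⟨⟨jj - 1, hlt⟩, by
              simpa [Nat.sub_add_cancel hjj1] using hjj3⟩]
          · rw [Set.indicator_of_notMem hω, if_neg]
            rintro ⟨i, hi⟩
            exact hω ⟨i.val + 1, by omega, by omega, hi⟩
      have hcomp : ∀ ω, (G (j + 1) ω - G j ω) * g (fun i => G (i.val + 1) ω) =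
          (G k ω - G j ω) *
            ((if G j ω ≤ 0 then (0:ℝ) else r * max (G j ω) 0 ^ (r - 1)) * u j ω) := by
        intro ω
        rw [hgval ω, hjk]
      have hcintnew : Integrable (fun ω => (G k ω - G j ω) *
          ((if G j ω ≤ 0 then (0:ℝ) else r * max (G j ω) 0 ^ (r - 1)) * u j ω)) μ := by
        refine Integrable.mono'
          (g := fun ω => r * (|G k ω| ^ r + |G j ω| ^ r) + r * (|G j ω| ^ r + |G j ω| ^ r))
          ((((hint k).add (hint j)).const_mul r).add (((hint j).add (hint j)).const_mul r))
          ?_ (Filter.Eventually.of_forall fun ω => ?_)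
        · refine (((hGm k).sub (hGm j)).mul (Measurable.mul ?_ (hum j))).aestronglyMeasurable
          exact Measurable.ite (measurableSet_le (hGm j) measurable_const) measurable_const
            (((Real.continuous_rpow_const (by linarith : (0:ℝ) ≤ r - 1)).measurable.comp
              ((hGm j).max measurable_const)).const_mul r)
        · rw [Real.norm_eq_abs, abs_mul, abs_mul]
          have h1 := hjr_cder_abs_le hr (G j ω)
          have h2 : |u j ω| ≤ 1 := by
            rw [abs_of_nonneg (hu0 j ω)]; exact hu1 j ω
          have h3 : |G k ω - G j ω| ≤ |G k ω| + |G j ω| := abs_sub _ _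
          have m1 : |G k ω| * |G j ω| ^ (r - 1) ≤ |G k ω| ^ r + |G j ω| ^ r :=
            hjr_mul_rpow_le hr (abs_nonneg _) (abs_nonneg _)
          have m2 : |G j ω| * |G j ω| ^ (r - 1) ≤ |G j ω| ^ r + |G j ω| ^ r :=
            hjr_mul_rpow_le hr (abs_nonneg _) (abs_nonneg _)
          have hrn : (0:ℝ) ≤ r := by linarith
          have hcu : |if G j ω ≤ 0 then (0:ℝ) else r * max (G j ω) 0 ^ (r - 1)| * |u j ω|
              ≤ r * |G j ω| ^ (r - 1) * 1 :=
            mul_le_mul h1 h2 (abs_nonneg _)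
              (mul_nonneg hrn (Real.rpow_nonneg (abs_nonneg _) _))
          calc |G k ω - G j ω| *
                (|if G j ω ≤ 0 then (0:ℝ) else r * max (G j ω) 0 ^ (r - 1)| * |u j ω|)
              ≤ (|G k ω| + |G j ω|) * (r * |G j ω| ^ (r - 1) * 1) := by
                refine mul_le_mul h3 hcu
                  (mul_nonneg (abs_nonneg _) (abs_nonneg _)) (by positivity)
            _ = r * (|G k ω| * |G j ω| ^ (r - 1)) + r * (|G j ω| * |G j ω| ^ (r - 1)) := by
                ring
            _ ≤ r * (|G k ω| ^ r + |G j ω| ^ r) + r * (|G j ω| ^ r + |G j ω| ^ r) := by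
                have q1 := mul_le_mul_of_nonneg_left m1 hrn
                have q2 := mul_le_mul_of_nonneg_left m2 hrn
                linarith
      have hcint : Integrable
          (fun ω => (G (j + 1) ω - G j ω) * g (fun i => G (i.val + 1) ω)) μ := by
        rw [show (fun ω => (G (j + 1) ω - G j ω) * g (fun i => G (i.val + 1) ω))
            = fun ω => (G k ω - G j ω) *
              ((if G j ω ≤ 0 then (0:ℝ) else r * max (G j ω) 0 ^ (r - 1)) * u j ω)
          from funext hcomp]
        exact hcintnew
      have hd := hdemi j hj1 g hgmono hcint
      rw [integral_congr_ae (Filter.Eventually.of_forall hcomp)] at hd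
      have hpt : ∀ ω, (G k ω - G j ω) *
            ((if G j ω ≤ 0 then (0:ℝ) else r * max (G j ω) 0 ^ (r - 1)) * u j ω)
          ≤ (T k ω - T j ω) * u j ω := by
        intro ω
        have hs := hjr_subgrad hr (G j ω) (G k ω)
        have hm := mul_le_mul_of_nonneg_right hs (hu0 j ω)
        calc (G k ω - G j ω) *
              ((if G j ω ≤ 0 then (0:ℝ) else r * max (G j ω) 0 ^ (r - 1)) * u j ω)
            = ((if G j ω ≤ 0 then (0:ℝ) else r * max (G j ω) 0 ^ (r - 1)) * (G k ω - G j ω))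
                * u j ω := by ring
          _ ≤ (max (G k ω) 0 ^ r - max (G j ω) 0 ^ r) * u j ω := hm
          _ = (T k ω - T j ω) * u j ω := rfl
      have hIright : Integrable (fun ω => (T k ω - T j ω) * u j ω) μ := by
        rw [show (fun ω => (T k ω - T j ω) * u j ω)
            = fun ω => T k ω * u j ω - T j ω * u j ω from funext fun ω => by ring]
        exact (hTuint k j).sub (hTuint j j)
      have hfinal := le_trans hd (integral_mono hcintnew hIright hpt)
      rw [show (fun ω => (T k ω - T j ω) * u j ω)
          = fun ω => T k ω * u j ω - T j ω * u j ω from funext fun ω => by ring,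
        integral_sub (hTuint k j) (hTuint j j)] at hfinal
      linarith
  -- first-entrance decomposition and per-piece bound
  have hdecomp : (μ (D n)).toReal ≤ ∑ k ∈ Finset.Icc 1 n, (μ (D k \ D (k - 1))).toReal := by
    have hcover : D n ⊆ ⋃ k ∈ Finset.Icc 1 n, (D k \ D (k - 1)) := by
      intro ω hω
      have hex : ∃ k, ω ∈ D k := ⟨n, hω⟩
      have hk0 : ω ∈ D (Nat.find hex) := Nat.find_spec hex
      have hk0n : Nat.find hex ≤ n := Nat.find_min' hex hω
      have hk01 : 1 ≤ Nat.find hex := by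
        by_contra h
        have h0 : Nat.find hex = 0 := by omega
        rw [h0, hD0] at hk0
        exact hk0
      have hnot : ω ∉ D (Nat.find hex - 1) := Nat.find_min hex (by omega)
      exact Set.mem_biUnion (Finset.mem_Icc.mpr ⟨hk01, hk0n⟩) ⟨hk0, hnot⟩
    have h1 : μ (D n) ≤ ∑ k ∈ Finset.Icc 1 n, μ (D k \ D (k - 1)) :=
      le_trans (measure_mono hcover) (measure_biUnion_finset_le _ _)
    have h2 : ∑ k ∈ Finset.Icc 1 n, μ (D k \ D (k - 1)) ≠ ⊤ := by
      refine ne_of_lt ?_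
      exact ENNReal.sum_lt_top.mpr fun k _ => measure_lt_top μ _
    refine le_trans (ENNReal.toReal_mono h2 h1) (le_of_eq ?_)
    exact ENNReal.toReal_sum fun k _ => measure_ne_top μ _
  have hpiece : ∀ k, 1 ≤ k → k ≤ n →
      ε ^ r * (μ (D k \ D (k - 1))).toReal
        ≤ (b k ^ r)⁻¹ * ((∫ ω, T k ω * u k ω ∂μ) - (∫ ω, T k ω * u (k - 1) ω ∂μ)) := by
    intro k hk1 hkn
    have hbk : 0 < b k := hb_pos k hk1 hkn
    have hBmeas : MeasurableSet (D k \ D (k - 1)) := (hDmeas k).diff (hDmeas (k - 1))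
    have hwit : ∀ ω ∈ D k \ D (k - 1), ε * b k ≤ G k ω := by
      rintro ω ⟨h1, h2⟩
      obtain ⟨j, hj1, hj2, hj3⟩ := h1
      rcases eq_or_lt_of_le hj2 with h | h
      · rw [← h]; exact hj3
      · exact absurd ⟨j, hj1, by omega, hj3⟩ h2
    have hpt : ∀ ω, (D k \ D (k - 1)).indicator (fun _ => (ε * b k) ^ r) ω
        ≤ T k ω * (u k ω - u (k - 1) ω) := by
      intro ω
      by_cases hωB : ω ∈ D k \ D (k - 1)
      · rw [Set.indicator_of_mem hωB]
        have h1 : u k ω = 1 := by simp [hudef, Set.indicator_of_mem hωB.1]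
        have h2 : u (k - 1) ω = 0 := by simp [hudef, Set.indicator_of_notMem hωB.2]
        rw [h1, h2]
        have hle : (ε * b k) ^ r ≤ max (G k ω) 0 ^ r :=
          Real.rpow_le_rpow (by positivity) (le_max_of_le_left (hwit ω hωB)) hr0.le
        simpa using hle
      · rw [Set.indicator_of_notMem hωB]
        have hmon : u (k - 1) ω ≤ u k ω := by
          simp only [hudef]
          exact Set.indicator_le_indicator_of_subset (hDsub (by omega)) (fun _ => zero_le_one) ω
        exact mul_nonneg (hTnn k ω) (by linarith)
    have hIl : Integrable ((D k \ D (k - 1)).indicator fun _ => (ε * b k) ^ r) μ :=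
      (integrable_const _).indicator hBmeas
    have hIr : Integrable (fun ω => T k ω * (u k ω - u (k - 1) ω)) μ := by
      have heq : (fun ω => T k ω * (u k ω - u (k - 1) ω))
          = fun ω => T k ω * u k ω - T k ω * u (k - 1) ω := by
        funext ω; ring
      rw [heq]; exact (hTuint k k).sub (hTuint k (k - 1))
    have hmono := integral_mono hIl hIr hpt
    rw [integral_indicator_const _ hBmeas, smul_eq_mul] at hmono
    have hsub : ∫ ω, T k ω * (u k ω - u (k - 1) ω) ∂μ
        = (∫ ω, T k ω * u k ω ∂μ) - ∫ ω, T k ω * u (k - 1) ω ∂μ := by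
      rw [← integral_sub (hTuint k k) (hTuint k (k - 1))]
      exact integral_congr_ae (Filter.Eventually.of_forall fun ω => by ring)
    rw [hsub] at hmono
    have hmul : (ε * b k) ^ r = ε ^ r * b k ^ r := Real.mul_rpow hε.le hbk.le
    have hbkr : (0:ℝ) < b k ^ r := Real.rpow_pos_of_pos hbk r
    calc ε ^ r * (μ (D k \ D (k - 1))).toReal
        = (b k ^ r)⁻¹ * ((μ (D k \ D (k - 1))).toReal * (ε * b k) ^ r) := by
          rw [hmul]; field_simp
      _ ≤ _ := mul_le_mul_of_nonneg_left hmono (inv_nonneg.mpr hbkr.le)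
  -- Abel summation comparison
  have habel : ∑ k ∈ Finset.Icc 1 n, (b k ^ r)⁻¹ *
        ((∫ ω, T k ω * u k ω ∂μ) - (∫ ω, T (k - 1) ω * u (k - 1) ω ∂μ))
      ≤ ∑ k ∈ Finset.Icc 1 n, (b k ^ r)⁻¹ * ((∫ ω, T k ω ∂μ) - (∫ ω, T (k - 1) ω ∂μ)) := by
    have key := hjr_abel (fun k => (b k ^ r)⁻¹)
      (fun k => (∫ ω, T k ω ∂μ) - (∫ ω, T k ω * u k ω ∂μ)) n
      (by simp [hT0])
      (by
        intro k _ _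
        simp only [sub_nonneg]
        refine integral_mono (hTuint k k) (hTint k) fun ω => ?_
        calc T k ω * u k ω ≤ T k ω * 1 := mul_le_mul_of_nonneg_left (hu1 k ω) (hTnn k ω)
          _ = T k ω := mul_one _)
      (by
        intro k hk1 hkn
        exact inv_anti₀ (Real.rpow_pos_of_pos (hb_pos k hk1 (by omega)) r)
          (Real.rpow_le_rpow (hb_pos k hk1 (by omega)).le (hb_mono k hk1 hkn) hr0.le))
      (by
        intro k hk1 hkn
        exact inv_nonneg.mpr (Real.rpow_pos_of_pos (hb_pos k hk1 hkn) r).le)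
    have hexp : ∑ k ∈ Finset.Icc 1 n, (b k ^ r)⁻¹ * ((∫ ω, T k ω ∂μ) - (∫ ω, T (k - 1) ω ∂μ))
        - ∑ k ∈ Finset.Icc 1 n, (b k ^ r)⁻¹ *
            ((∫ ω, T k ω * u k ω ∂μ) - (∫ ω, T (k - 1) ω * u (k - 1) ω ∂μ))
        = ∑ k ∈ Finset.Icc 1 n, (b k ^ r)⁻¹ *
            (((∫ ω, T k ω ∂μ) - (∫ ω, T k ω * u k ω ∂μ))
              - ((∫ ω, T (k - 1) ω ∂μ) - (∫ ω, T (k - 1) ω * u (k - 1) ω ∂μ))) := by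
      rw [← Finset.sum_sub_distrib]
      exact Finset.sum_congr rfl fun k _ => by ring
    linarith [key, hexp]
  -- assemble
  have hmain : ε ^ r * (μ (D n)).toReal
      ≤ ∑ k ∈ Finset.Icc 1 n, (b k ^ r)⁻¹ * ((∫ ω, T k ω ∂μ) - (∫ ω, T (k - 1) ω ∂μ)) := by
    calc ε ^ r * (μ (D n)).toReal
        ≤ ε ^ r * ∑ k ∈ Finset.Icc 1 n, (μ (D k \ D (k - 1))).toReal :=
          mul_le_mul_of_nonneg_left hdecomp (Real.rpow_nonneg hε.le r)
      _ = ∑ k ∈ Finset.Icc 1 n, ε ^ r * (μ (D k \ D (k - 1))).toReal := Finset.mul_sum _ _ _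
      _ ≤ ∑ k ∈ Finset.Icc 1 n, (b k ^ r)⁻¹ *
            ((∫ ω, T k ω * u k ω ∂μ) - (∫ ω, T (k - 1) ω * u (k - 1) ω ∂μ)) := by
          refine Finset.sum_le_sum fun k hk => ?_
          rw [Finset.mem_Icc] at hk
          refine le_trans (hpiece k hk.1 hk.2) ?_
          have hbk : (0:ℝ) < b k ^ r := Real.rpow_pos_of_pos (hb_pos k hk.1 hk.2) r
          exact mul_le_mul_of_nonneg_left (by linarith [hstep k hk.1]) (inv_nonneg.mpr hbk.le)
      _ ≤ _ := habel
  -- conclude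
  refine le_trans ?_ (le_trans hmain (le_of_eq (Finset.sum_congr rfl fun k hk => ?_)))
  · exact le_of_eq rfl
  · rw [div_eq_inv_mul]



/-- **Hájek–Rényi type inequality for demimartingales** (Christofides / Tómács–Libor):
if `(S_n)_{n≥1}` is a demimartingale with `S_0 = 0` (so that `E[|S_0|^r] = 0`), `r ≥ 1`
with `|S_k|^r` integrable for every `k`, `(b_k)` positive nondecreasing and `ε > 0`, then
`P(max_{1≤k≤n} |S_k|/b_k ≥ ε) ≤ ε^{-r} Σ_{k=1}^n (E[|S_k|^r] - E[|S_{k-1}|^r])/b_k^r`.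
The event `max_{1≤k≤n} |S_k|/b_k ≥ ε` is expressed as the existence of some `1 ≤ k ≤ n`
with `|S_k|/b_k ≥ ε`; `x ^ r` denotes the real power `Real.rpow`. -/
theorem hajek_renyi_demimartingale
    {Ω : Type*} [MeasurableSpace Ω] (μ : Measure Ω) [IsProbabilityMeasure μ]
    (S : ℕ → Ω → ℝ)
    (hS : IsDemimartingale μ S)
    (hS0 : ∀ ω, S 0 ω = 0)
    (r : ℝ) (hr : 1 ≤ r)
    (hS_int : ∀ k, Integrable (fun ω => |S k ω| ^ r) μ)
    (n : ℕ) (b : ℕ → ℝ)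
    (hb_pos : ∀ k, 1 ≤ k → k ≤ n → 0 < b k)
    (hb_mono : ∀ k, 1 ≤ k → k < n → b k ≤ b (k + 1))
    (ε : ℝ) (hε : 0 < ε) :
    (μ {ω | ∃ k, 1 ≤ k ∧ k ≤ n ∧ ε ≤ |S k ω| / b k}).toReal
      ≤ ε ^ (-r) * ∑ k ∈ Finset.Icc 1 n,
          ((∫ ω, |S k ω| ^ r ∂μ) - (∫ ω, |S (k - 1) ω| ^ r ∂μ)) / b k ^ r := by
  classical
  have hr0 : (0:ℝ) < r := lt_of_lt_of_le one_pos hr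
  obtain ⟨hSint, hSdm⟩ := hS
  -- choose measurable modifications
  have hchoice : ∀ k, ∃ f : Ω → ℝ, Measurable f ∧ S k =ᵐ[μ] f ∧ (k = 0 → ∀ ω, f ω = 0) := by
    intro k
    rcases Nat.eq_zero_or_pos k with h | h
    · exact ⟨fun _ => 0, measurable_const,
        Filter.Eventually.of_forall (by simp [h, hS0]), fun _ _ => rfl⟩
    · obtain ⟨f, hf1, hf2⟩ := (hSint k h).aestronglyMeasurable
      exact ⟨f, hf1.measurable, hf2, fun h0 => absurd h0 (by omega)⟩
  choose F hFm hFe hF0' using hchoice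
  have hF0 : ∀ ω, F 0 ω = 0 := hF0' 0 rfl
  -- transfer hypotheses to F
  have hintF : ∀ k, Integrable (fun ω => |F k ω| ^ r) μ := by
    intro k
    exact (hS_int k).congr ((hFe k).mono fun ω e => by simp only [e])
  have hdemiF : ∀ j, 1 ≤ j → ∀ g : (Fin j → ℝ) → ℝ, Monotone g →
      Integrable (fun ω => (F (j + 1) ω - F j ω) * g (fun i => F (i.val + 1) ω)) μ →
      0 ≤ ∫ ω, (F (j + 1) ω - F j ω) * g (fun i => F (i.val + 1) ω) ∂μ := by
    intro j hj g hg hintc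
    have hae : (fun ω => (F (j + 1) ω - F j ω) * g (fun i => F (i.val + 1) ω))
        =ᵐ[μ] (fun ω => (S (j + 1) ω - S j ω) * g (fun i => S (i.val + 1) ω)) := by
      have h3 : ∀ᵐ ω ∂μ, ∀ i : Fin j, S (i.val + 1) ω = F (i.val + 1) ω :=
        (MeasureTheory.ae_all_iff).mpr fun i => hFe (i.val + 1)
      filter_upwards [hFe (j + 1), hFe j, h3] with ω e1 e2 e3
      rw [e1, e2]
      congr 2
      funext i
      exact (e3 i).symm
    rw [integral_congr_ae hae]
    exact hSdm j hj g hg (hintc.congr hae)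
  -- the negated sequence
  set N : ℕ → Ω → ℝ := fun k ω => -(F k ω) with hNdef
  have hNm : ∀ k, Measurable (N k) := fun k => (hFm k).neg
  have hN0 : ∀ ω, N 0 ω = 0 := fun ω => by simp [hNdef, hF0 ω]
  have hintN : ∀ k, Integrable (fun ω => |N k ω| ^ r) μ := by
    intro k
    have : (fun ω => |N k ω| ^ r) = fun ω => |F k ω| ^ r := by
      funext ω; simp [hNdef]
    rw [this]; exact hintF k
  have hdemiN : ∀ j, 1 ≤ j → ∀ g : (Fin j → ℝ) → ℝ, Monotone g →
      Integrable (fun ω => (N (j + 1) ω - N j ω) * g (fun i => N (i.val + 1) ω)) μ →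
      0 ≤ ∫ ω, (N (j + 1) ω - N j ω) * g (fun i => N (i.val + 1) ω) ∂μ := by
    intro j hj g hg hintc
    set g' : (Fin j → ℝ) → ℝ := fun x => -(g (fun i => -(x i))) with hg'def
    have hg'mono : Monotone g' := by
      intro x y hxy
      simp only [hg'def, neg_le_neg_iff]
      exact hg fun i => neg_le_neg (hxy i)
    have hcompeq : ∀ ω, (N (j + 1) ω - N j ω) * g (fun i => N (i.val + 1) ω)
        = (F (j + 1) ω - F j ω) * g' (fun i => F (i.val + 1) ω) := by
      intro ω
      simp only [hNdef, hg'def]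
      ring
    have hintF' : Integrable
        (fun ω => (F (j + 1) ω - F j ω) * g' (fun i => F (i.val + 1) ω)) μ :=
      hintc.congr (Filter.Eventually.of_forall hcompeq)
    rw [integral_congr_ae (Filter.Eventually.of_forall hcompeq)]
    exact hdemiF j hj g' hg'mono hintF'
  -- one-sided bounds
  have hplus := hjr_one_sided μ F hFm hF0 hdemiF r hr hintF n b hb_pos hb_mono ε hε
  have hminus := hjr_one_sided μ N hNm hN0 hdemiN r hr hintN n b hb_pos hb_mono ε hε
  -- measure transfer and union bound
  have hAA' : μ {ω | ∃ k, 1 ≤ k ∧ k ≤ n ∧ ε ≤ |S k ω| / b k}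
      = μ {ω | ∃ k, 1 ≤ k ∧ k ≤ n ∧ ε ≤ |F k ω| / b k} := by
    refine measure_congr (Filter.eventuallyEq_set.mpr ?_)
    have h3 : ∀ᵐ ω ∂μ, ∀ k, S k ω = F k ω := (MeasureTheory.ae_all_iff).mpr hFe
    filter_upwards [h3] with ω hω
    constructor
    · rintro ⟨k, h1, h2, h3'⟩
      exact ⟨k, h1, h2, by rw [← hω k]; exact h3'⟩
    · rintro ⟨k, h1, h2, h3'⟩
      exact ⟨k, h1, h2, by rw [hω k]; exact h3'⟩
  have hsub : {ω | ∃ k, 1 ≤ k ∧ k ≤ n ∧ ε ≤ |F k ω| / b k}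
      ⊆ {ω | ∃ k, 1 ≤ k ∧ k ≤ n ∧ ε * b k ≤ F k ω}
        ∪ {ω | ∃ k, 1 ≤ k ∧ k ≤ n ∧ ε * b k ≤ N k ω} := by
    rintro ω ⟨k, h1, h2, h3⟩
    have hb := hb_pos k h1 h2
    have habs : ε * b k ≤ |F k ω| := (le_div_iff₀ hb).mp h3
    rcases le_abs.mp habs with hc | hc
    · exact Or.inl ⟨k, h1, h2, hc⟩
    · exact Or.inr ⟨k, h1, h2, by simpa [hNdef] using hc⟩
  have hmeasure : (μ {ω | ∃ k, 1 ≤ k ∧ k ≤ n ∧ ε ≤ |F k ω| / b k}).toReal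
      ≤ (μ {ω | ∃ k, 1 ≤ k ∧ k ≤ n ∧ ε * b k ≤ F k ω}).toReal
        + (μ {ω | ∃ k, 1 ≤ k ∧ k ≤ n ∧ ε * b k ≤ N k ω}).toReal := by
    have h1 : μ {ω | ∃ k, 1 ≤ k ∧ k ≤ n ∧ ε ≤ |F k ω| / b k}
        ≤ μ {ω | ∃ k, 1 ≤ k ∧ k ≤ n ∧ ε * b k ≤ F k ω}
          + μ {ω | ∃ k, 1 ≤ k ∧ k ≤ n ∧ ε * b k ≤ N k ω} :=
      le_trans (measure_mono hsub) (measure_union_le _ _)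
    refine le_trans (ENNReal.toReal_mono ?_ h1) (le_of_eq (ENNReal.toReal_add ?_ ?_))
    · exact ENNReal.add_ne_top.mpr ⟨measure_ne_top μ _, measure_ne_top μ _⟩
    · exact measure_ne_top μ _
    · exact measure_ne_top μ _
  -- integrability of the positive parts
  have hTFint : ∀ m, Integrable (fun ω => max (F m ω) 0 ^ r) μ := by
    intro m
    refine (hintF m).mono'
      (((Real.continuous_rpow_const hr0.le).measurable.comp
        ((hFm m).max measurable_const)).aestronglyMeasurable)
      (Filter.Eventually.of_forall fun ω => ?_)
    rw [Real.norm_eq_abs, abs_of_nonneg (Real.rpow_nonneg (le_max_right _ _) r)]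
    exact Real.rpow_le_rpow (le_max_right _ _) (max_le (le_abs_self _) (abs_nonneg _)) hr0.le
  have hTNint : ∀ m, Integrable (fun ω => max (N m ω) 0 ^ r) μ := by
    intro m
    refine (hintN m).mono'
      (((Real.continuous_rpow_const hr0.le).measurable.comp
        ((hNm m).max measurable_const)).aestronglyMeasurable)
      (Filter.Eventually.of_forall fun ω => ?_)
    rw [Real.norm_eq_abs, abs_of_nonneg (Real.rpow_nonneg (le_max_right _ _) r)]
    exact Real.rpow_le_rpow (le_max_right _ _) (max_le (le_abs_self _) (abs_nonneg _)) hr0.le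
  -- splitting |x|^r into positive and negative parts
  have hM : ∀ m, (∫ ω, max (F m ω) 0 ^ r ∂μ) + (∫ ω, max (N m ω) 0 ^ r ∂μ)
      = ∫ ω, |S m ω| ^ r ∂μ := by
    intro m
    rw [← integral_add (hTFint m) (hTNint m)]
    have e1 : (∫ ω, (max (F m ω) 0 ^ r + max (N m ω) 0 ^ r) ∂μ) = ∫ ω, |F m ω| ^ r ∂μ := by
      refine integral_congr_ae (Filter.Eventually.of_forall fun ω => ?_)
      simp only [hNdef]
      exact hjr_split hr0 (F m ω)
    rw [e1]
    exact integral_congr_ae ((hFe m).mono fun ω e => by simp only [e]) |>.symm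
  -- combine the two one-sided sums
  have hcombine : (∑ k ∈ Finset.Icc 1 n,
        ((∫ ω, max (F k ω) 0 ^ r ∂μ) - (∫ ω, max (F (k - 1) ω) 0 ^ r ∂μ)) / b k ^ r)
      + (∑ k ∈ Finset.Icc 1 n,
        ((∫ ω, max (N k ω) 0 ^ r ∂μ) - (∫ ω, max (N (k - 1) ω) 0 ^ r ∂μ)) / b k ^ r)
      = ∑ k ∈ Finset.Icc 1 n,
          ((∫ ω, |S k ω| ^ r ∂μ) - (∫ ω, |S (k - 1) ω| ^ r ∂μ)) / b k ^ r := by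
    rw [← Finset.sum_add_distrib]
    refine Finset.sum_congr rfl fun k hk => ?_
    rw [← add_div]
    congr 1
    have e1 := hM k
    have e2 := hM (k - 1)
    linarith
  -- final computation
  rw [Real.rpow_neg hε.le]
  rw [le_inv_mul_iff₀ (Real.rpow_pos_of_pos hε r)]
  calc ε ^ r * (μ {ω | ∃ k, 1 ≤ k ∧ k ≤ n ∧ ε ≤ |S k ω| / b k}).toReal
      = ε ^ r * (μ {ω | ∃ k, 1 ≤ k ∧ k ≤ n ∧ ε ≤ |F k ω| / b k}).toReal := by rw [hAA']
    _ ≤ ε ^ r * ((μ {ω | ∃ k, 1 ≤ k ∧ k ≤ n ∧ ε * b k ≤ F k ω}).toReal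
          + (μ {ω | ∃ k, 1 ≤ k ∧ k ≤ n ∧ ε * b k ≤ N k ω}).toReal) :=
        mul_le_mul_of_nonneg_left hmeasure (Real.rpow_nonneg hε.le r)
    _ = ε ^ r * (μ {ω | ∃ k, 1 ≤ k ∧ k ≤ n ∧ ε * b k ≤ F k ω}).toReal
          + ε ^ r * (μ {ω | ∃ k, 1 ≤ k ∧ k ≤ n ∧ ε * b k ≤ N k ω}).toReal := by ring
    _ ≤ (∑ k ∈ Finset.Icc 1 n,
            ((∫ ω, max (F k ω) 0 ^ r ∂μ) - (∫ ω, max (F (k - 1) ω) 0 ^ r ∂μ)) / b k ^ r)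
          + (∑ k ∈ Finset.Icc 1 n,
            ((∫ ω, max (N k ω) 0 ^ r ∂μ) - (∫ ω, max (N (k - 1) ω) 0 ^ r ∂μ)) / b k ^ r) :=
        add_le_add hplus hminus
    _ = _ := hcombine
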